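/- Let g(x₁,x₂) = g₂₀ x₁² + g₁₁ x₁x₂ + g₀₂ x₂² be a positive definite quadratic form on ℝ² with sublevel set G = {x : g(x) ≤ 1} (an ellipse), and let λ_{ij} = ∫_G x₁^i x₂^j dx. Then the coefficient vector (g₂₀, g₁₁, g₀₂) satisfies the linear system with matrix rows (λ₄₀, λ₃₁, λ₂₂), (λ₃₁, λ₂₂, λ₁₃), (λ₂₂, λ₁₃, λ₀₄) and right-hand side (1/2)(λ₂₀, λ₁₁, λ₀₂), and this system has a unique solution. -/

import Mathlib

open MeasureTheory

namespace QFR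

variable (p q r : ℝ)

/-- the quadratic form -/
def gg (x : Fin 2 → ℝ) : ℝ := p * x 0 ^ 2 + q * (x 0 * x 1) + r * x 1 ^ 2

/-- the ellipse -/
def GG : Set (Fin 2 → ℝ) := {x : Fin 2 → ℝ | gg p q r x ≤ 1}

lemma gg_cont : Continuous (gg p q r) := by
  unfold gg; fun_prop

lemma gg_smul (c : ℝ) (x : Fin 2 → ℝ) : gg p q r (c • x) = c ^ 2 * gg p q r x := by
  simp only [gg, Pi.smul_apply, smul_eq_mul]; ring

lemma GG_measurable : MeasurableSet (GG p q r) :=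
  measurableSet_le (gg_cont p q r).measurable measurable_const

section pd

variable (hpd : ∀ x : Fin 2 → ℝ, x ≠ 0 → 0 < gg p q r x)

include hpd

lemma gg_nonneg (x : Fin 2 → ℝ) : 0 ≤ gg p q r x := by
  rcases eq_or_ne x 0 with rfl | hx
  · simp [gg]
  · exact (hpd x hx).le

lemma GG_compact : IsCompact (GG p q r) := by
  obtain ⟨x₁, hx₁⟩ : ∃ x : Fin 2 → ℝ, ‖x‖ = 1 := exists_norm_eq _ zero_le_one
  obtain ⟨z, hz, hzmin⟩ := (isCompact_sphere (0 : Fin 2 → ℝ) 1).exists_isMinOn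
    ⟨x₁, by simpa using hx₁⟩ ((gg_cont p q r).continuousOn)
  have hznorm : ‖z‖ = 1 := by simpa using hz
  have hzne : z ≠ 0 := by intro h; rw [h] at hznorm; simp at hznorm
  set m := gg p q r z with hm
  have hmpos : 0 < m := hpd z hzne
  have hbound : ∀ x : Fin 2 → ℝ, m * ‖x‖ ^ 2 ≤ gg p q r x := by
    intro x
    rcases eq_or_ne x 0 with rfl | hx
    · simp [gg]
    · have hnx : (0:ℝ) < ‖x‖ := norm_pos_iff.2 hx
      have hunit : (‖x‖⁻¹ • x) ∈ Metric.sphere (0 : Fin 2 → ℝ) 1 := by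
        simp [norm_smul, abs_of_pos (inv_pos.2 hnx), inv_mul_cancel₀ hnx.ne']
      have h1 : m ≤ gg p q r (‖x‖⁻¹ • x) := hzmin hunit
      have h2 : gg p q r (‖x‖⁻¹ • x) = (‖x‖⁻¹) ^ 2 * gg p q r x := gg_smul p q r _ x
      rw [h2] at h1
      have := mul_le_mul_of_nonneg_left h1 (le_of_lt (pow_pos hnx 2))
      calc m * ‖x‖ ^ 2 = ‖x‖ ^ 2 * m := by ring
        _ ≤ ‖x‖ ^ 2 * ((‖x‖⁻¹) ^ 2 * gg p q r x) := this
        _ = gg p q r x := by field_simp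
  refine Metric.isCompact_of_isClosed_isBounded
    (isClosed_le (gg_cont p q r) continuous_const) ?_
  rw [Metric.isBounded_iff_subset_closedBall 0]
  refine ⟨Real.sqrt (1 / m), fun x hx => ?_⟩
  have hx1 : gg p q r x ≤ 1 := hx
  have h2 : m * ‖x‖ ^ 2 ≤ 1 := le_trans (hbound x) hx1
  have h3 : ‖x‖ ^ 2 ≤ 1 / m := by
    rw [le_div_iff₀ hmpos]; linarith [h2]
  simp only [Metric.mem_closedBall, dist_zero_right]
  calc ‖x‖ = Real.sqrt (‖x‖ ^ 2) := by rw [Real.sqrt_sq (norm_nonneg x)]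
    _ ≤ Real.sqrt (1 / m) := Real.sqrt_le_sqrt h3

lemma integrableOn_GG {h : (Fin 2 → ℝ) → ℝ} (hc : Continuous h) :
    IntegrableOn h (GG p q r) volume :=
  hc.continuousOn.integrableOn_compact (GG_compact p q r hpd)

/-- scaling: ∫_{g ≤ t} h = t^2 ∫_{g ≤ 1} h  for h 2-homogeneous, t ≥ 0 -/
lemma scaling {h : (Fin 2 → ℝ) → ℝ} (hc : Continuous h)
    (hhom : ∀ (c : ℝ) (x : Fin 2 → ℝ), 0 ≤ c → h (c • x) = c ^ 2 * h x)
    {t : ℝ} (ht0 : 0 ≤ t) :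
    ∫ x in {x : Fin 2 → ℝ | gg p q r x ≤ t}, h x = t ^ 2 * ∫ x in GG p q r, h x := by
  rcases eq_or_lt_of_le ht0 with rfl | ht
  · have hsub : {x : Fin 2 → ℝ | gg p q r x ≤ 0} ⊆ {(0 : Fin 2 → ℝ)} := by
      intro x hx
      simp only [Set.mem_singleton_iff]
      by_contra hxne
      exact absurd hx (not_le.2 (hpd x hxne))
    have hz : volume {x : Fin 2 → ℝ | gg p q r x ≤ 0} = 0 :=
      measure_mono_null hsub (by simp)
    rw [Measure.restrict_eq_zero.2 hz]
    simp
  · set c := Real.sqrt t with hcdef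
    have hc0 : 0 < c := Real.sqrt_pos.2 ht
    have hc2 : c ^ 2 = t := Real.sq_sqrt ht0
    have hmeas : MeasurableSet {x : Fin 2 → ℝ | gg p q r x ≤ t} :=
      measurableSet_le (gg_cont p q r).measurable measurable_const
    have key := Measure.integral_comp_smul (volume : Measure (Fin 2 → ℝ))
      (Set.indicator {x : Fin 2 → ℝ | gg p q r x ≤ t} h) c
    have hfin : Module.finrank ℝ (Fin 2 → ℝ) = 2 := by simp
    rw [hfin] at key
    have heq : (fun x => Set.indicator {x : Fin 2 → ℝ | gg p q r x ≤ t} h (c • x))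
        = fun x => t * Set.indicator (GG p q r) h x := by
      funext x
      have hmem : (c • x) ∈ {x : Fin 2 → ℝ | gg p q r x ≤ t} ↔ x ∈ GG p q r := by
        simp only [Set.mem_setOf_eq, GG, gg_smul, hc2]
        constructor
        · intro hh; nlinarith [hh, ht]
        · intro hh; nlinarith [hh, ht]
      by_cases hx : x ∈ GG p q r
      · rw [Set.indicator_of_mem (hmem.2 hx), Set.indicator_of_mem hx, hhom c x hc0.le, hc2]
      · rw [Set.indicator_of_notMem (fun hh => hx (hmem.1 hh)), Set.indicator_of_notMem hx,
          mul_zero]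
    rw [heq] at key
    rw [integral_const_mul, integral_indicator (GG_measurable p q r),
      integral_indicator hmeas] at key
    have habs : |((c ^ 2) ⁻¹ : ℝ)| = t⁻¹ := by
      rw [hc2, abs_of_nonneg (by positivity)]
    rw [habs, smul_eq_mul] at key
    field_simp at key
    rw [← key]

/-- key identity: ∫_G g h = (2/3) ∫_G h for h continuous 2-homogeneous -/
lemma key_identity {h : (Fin 2 → ℝ) → ℝ} (hc : Continuous h)
    (hhom : ∀ (c : ℝ) (x : Fin 2 → ℝ), 0 ≤ c → h (c • x) = c ^ 2 * h x) :
    ∫ x in GG p q r, gg p q r x * h x = (2 / 3) * ∫ x in GG p q r, h x := by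
  have hGc := GG_compact p q r hpd
  have hGm := GG_measurable p q r
  -- bound for h on G
  obtain ⟨C, hC⟩ := hGc.exists_bound_of_continuousOn hc.continuousOn
  set μ : Measure ((Fin 2 → ℝ) × ℝ) :=
    (volume.restrict (GG p q r)).prod (volume.restrict (Set.Icc (0:ℝ) 1)) with hμ
  set F : (Fin 2 → ℝ) × ℝ → ℝ :=
    Set.indicator {z : (Fin 2 → ℝ) × ℝ | gg p q r z.1 ≤ z.2} (fun z => h z.1) with hF
  have hSm : MeasurableSet {z : (Fin 2 → ℝ) × ℝ | gg p q r z.1 ≤ z.2} :=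
    measurableSet_le ((gg_cont p q r).comp continuous_fst).measurable
      continuous_snd.measurable
  haveI : IsFiniteMeasure (volume.restrict (GG p q r)) :=
    ⟨by rw [Measure.restrict_apply_univ]; exact hGc.measure_lt_top⟩
  haveI : IsFiniteMeasure (volume.restrict (Set.Icc (0:ℝ) 1)) :=
    ⟨by rw [Measure.restrict_apply_univ]; exact measure_Icc_lt_top⟩
  have hint : Integrable F μ := by
    refine Integrable.mono' (integrable_const (max C 0)) ?_ ?_
    · exact ((hc.comp continuous_fst).stronglyMeasurable.indicator hSm).aestronglyMeasurable
    · have hprod : μ = ((volume : Measure (Fin 2 → ℝ)).prod volume).restrict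
          ((GG p q r) ×ˢ (Set.Icc (0:ℝ) 1)) := by
        rw [hμ, Measure.prod_restrict]
      have hae : ∀ᵐ z ∂μ, z ∈ (GG p q r) ×ˢ (Set.Icc (0:ℝ) 1) := by
        rw [hprod]
        exact ae_restrict_mem (hGm.prod measurableSet_Icc)
      filter_upwards [hae] with z hz
      rw [hF]
      by_cases hmem : z ∈ {z : (Fin 2 → ℝ) × ℝ | gg p q r z.1 ≤ z.2}
      · rw [Set.indicator_of_mem hmem]
        exact le_max_of_le_left (hC z.1 hz.1)
      · rw [Set.indicator_of_notMem hmem]; simp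
  have hswap := integral_integral_swap (f := fun x t => F (x, t)) (by exact hint)
  -- LHS : ∫ x in G, (1 - g x) * h x
  have hLHS : (∫ x in GG p q r, ∫ t in Set.Icc (0:ℝ) 1, F (x, t))
      = ∫ x in GG p q r, (1 - gg p q r x) * h x := by
    refine setIntegral_congr_fun hGm (fun x hx => ?_)
    have hx0 : 0 ≤ gg p q r x := gg_nonneg p q r hpd x
    have hx1 : gg p q r x ≤ 1 := hx
    have : (fun t => F (x, t)) = Set.indicator (Set.Ici (gg p q r x)) (fun _ => h x) := by
      funext t
      by_cases hgt : gg p q r x ≤ t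
      · rw [hF, Set.indicator_of_mem (by exact hgt : (x, t) ∈ _),
          Set.indicator_of_mem (by exact hgt)]
      · rw [hF, Set.indicator_of_notMem (by exact hgt : ¬ (x,t) ∈ _),
          Set.indicator_of_notMem (by exact hgt)]
    rw [this, integral_indicator measurableSet_Ici, Measure.restrict_restrict measurableSet_Ici,
      setIntegral_const]
    have hIcap : Set.Ici (gg p q r x) ∩ Set.Icc (0:ℝ) 1 = Set.Icc (gg p q r x) 1 := by
      ext t
      simp only [Set.mem_inter_iff, Set.mem_Ici, Set.mem_Icc]
      constructor
      · rintro ⟨h1, _, h3⟩; exact ⟨h1, h3⟩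
      · rintro ⟨h1, h2⟩; exact ⟨h1, le_trans hx0 h1, h2⟩
    rw [hIcap, measureReal_def, Real.volume_Icc, ENNReal.toReal_ofReal (by linarith)]
    simp only [smul_eq_mul]
  -- RHS : ∫ t in [0,1], t^2 * I(1)
  have hRHS : (∫ t in Set.Icc (0:ℝ) 1, ∫ x in GG p q r, F (x, t))
      = ∫ t in Set.Icc (0:ℝ) 1, t ^ 2 * ∫ x in GG p q r, h x := by
    refine setIntegral_congr_fun measurableSet_Icc (fun t ht => ?_)
    have : (fun x => F (x, t)) = Set.indicator {x : Fin 2 → ℝ | gg p q r x ≤ t} h := by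
      funext x
      by_cases hgt : gg p q r x ≤ t
      · rw [hF, Set.indicator_of_mem (by exact hgt : (x, t) ∈ _),
          Set.indicator_of_mem (by exact hgt)]
      · rw [hF, Set.indicator_of_notMem (by exact hgt : ¬ (x,t) ∈ _),
          Set.indicator_of_notMem (by exact hgt)]
    rw [this]
    have hmt : MeasurableSet {x : Fin 2 → ℝ | gg p q r x ≤ t} :=
      measurableSet_le (gg_cont p q r).measurable measurable_const
    rw [integral_indicator hmt, Measure.restrict_restrict hmt]
    have hsub : {x : Fin 2 → ℝ | gg p q r x ≤ t} ∩ GG p q r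
        = {x : Fin 2 → ℝ | gg p q r x ≤ t} := by
      apply Set.inter_eq_left.2
      intro x hx
      exact le_trans hx ht.2
    rw [hsub]
    exact scaling p q r hpd hc hhom ht.1
  have hcube : (∫ t in Set.Icc (0:ℝ) 1, t ^ 2 * ∫ x in GG p q r, h x)
      = (1/3) * ∫ x in GG p q r, h x := by
    rw [integral_mul_const]
    congr 1
    rw [integral_Icc_eq_integral_Ioc, ← intervalIntegral.integral_of_le zero_le_one,
      integral_pow]
    norm_num
  have hfinal : (∫ x in GG p q r, (1 - gg p q r x) * h x)
      = (1/3) * ∫ x in GG p q r, h x := by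
    rw [← hLHS, hswap, hRHS, hcube]
  have hinth : IntegrableOn h (GG p q r) volume := integrableOn_GG p q r hpd hc
  have hintg : IntegrableOn (fun x => gg p q r x * h x) (GG p q r) volume :=
    integrableOn_GG p q r hpd ((gg_cont p q r).mul hc)
  have hsplit : (∫ x in GG p q r, (1 - gg p q r x) * h x)
      = (∫ x in GG p q r, h x) - ∫ x in GG p q r, gg p q r x * h x := by
    rw [← integral_sub hinth hintg]
    congr 1
    funext x
    ring
  rw [hsplit] at hfinal
  linarith

lemma integral_combo3 {f₁ f₂ f₃ : (Fin 2 → ℝ) → ℝ}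
    (h₁ : Continuous f₁) (h₂ : Continuous f₂) (h₃ : Continuous f₃) (a b c : ℝ) :
    ∫ x in GG p q r, (a * f₁ x + b * f₂ x + c * f₃ x) =
      a * (∫ x in GG p q r, f₁ x) + b * (∫ x in GG p q r, f₂ x)
        + c * (∫ x in GG p q r, f₃ x) := by
  have i₁ := (integrableOn_GG p q r hpd h₁).const_mul a
  have i₂ := (integrableOn_GG p q r hpd h₂).const_mul b
  have i₃ := (integrableOn_GG p q r hpd h₃).const_mul c
  have i₁₂ : IntegrableOn (fun x => a * f₁ x + b * f₂ x) (GG p q r) volume := i₁.add i₂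
  rw [integral_add i₁₂ i₃, integral_add i₁ i₂, integral_const_mul,
    integral_const_mul, integral_const_mul]

lemma integral_combo5 {f₁ f₂ f₃ f₄ f₅ : (Fin 2 → ℝ) → ℝ}
    (h₁ : Continuous f₁) (h₂ : Continuous f₂) (h₃ : Continuous f₃)
    (h₄ : Continuous f₄) (h₅ : Continuous f₅) (a b c d e : ℝ) :
    ∫ x in GG p q r, (a * f₁ x + b * f₂ x + c * f₃ x + d * f₄ x + e * f₅ x) =
      a * (∫ x in GG p q r, f₁ x) + b * (∫ x in GG p q r, f₂ x)
        + c * (∫ x in GG p q r, f₃ x) + d * (∫ x in GG p q r, f₄ x)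
        + e * (∫ x in GG p q r, f₅ x) := by
  have i₁ := (integrableOn_GG p q r hpd h₁).const_mul a
  have i₂ := (integrableOn_GG p q r hpd h₂).const_mul b
  have i₃ := (integrableOn_GG p q r hpd h₃).const_mul c
  have i₄ := (integrableOn_GG p q r hpd h₄).const_mul d
  have i₅ := (integrableOn_GG p q r hpd h₅).const_mul e
  have i₁₂ : IntegrableOn (fun x => a * f₁ x + b * f₂ x) (GG p q r) volume := i₁.add i₂
  have i₁₃ : IntegrableOn (fun x => a * f₁ x + b * f₂ x + c * f₃ x) (GG p q r) volume :=
    i₁₂.add i₃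
  have i₁₄ : IntegrableOn (fun x => a * f₁ x + b * f₂ x + c * f₃ x + d * f₄ x)
      (GG p q r) volume := i₁₃.add i₄
  rw [integral_add i₁₄ i₅, integral_add i₁₃ i₄,
    integral_add i₁₂ i₃, integral_add i₁ i₂, integral_const_mul,
    integral_const_mul, integral_const_mul, integral_const_mul, integral_const_mul]

end pd
end QFR

open QFR

/-- The `n = 2`, `d = 2` instance: for a positive definite quadratic form
`g(x) = g₂₀x₁² + g₁₁x₁x₂ + g₀₂x₂²` with sublevel set `G` (an ellipse) and moments
`λᵢⱼ = ∫_G x₁ⁱx₂ʲ dx`, the coefficients satisfy the linear system with matrix rows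
`(λ₄₀,λ₃₁,λ₂₂), (λ₃₁,λ₂₂,λ₁₃), (λ₂₂,λ₁₃,λ₀₄)` and right-hand side
`(2/3)(λ₂₀,λ₁₁,λ₀₂)`, and this system has a unique solution. -/
theorem quadratic_form_recovery (g20 g11 g02 : ℝ)
    (hpd : ∀ x : Fin 2 → ℝ, x ≠ 0 →
      0 < g20 * x 0 ^ 2 + g11 * (x 0 * x 1) + g02 * x 1 ^ 2)
    (lam : ℕ → ℕ → ℝ)
    (hlam : ∀ i j : ℕ, lam i j =
      ∫ x in {x : Fin 2 → ℝ |
          g20 * x 0 ^ 2 + g11 * (x 0 * x 1) + g02 * x 1 ^ 2 ≤ 1},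
        x 0 ^ i * x 1 ^ j) :
    (g20 * lam 4 0 + g11 * lam 3 1 + g02 * lam 2 2 = (2 / 3) * lam 2 0 ∧
     g20 * lam 3 1 + g11 * lam 2 2 + g02 * lam 1 3 = (2 / 3) * lam 1 1 ∧
     g20 * lam 2 2 + g11 * lam 1 3 + g02 * lam 0 4 = (2 / 3) * lam 0 2) ∧
    ∀ a b c : ℝ,
      (a * lam 4 0 + b * lam 3 1 + c * lam 2 2 = (2 / 3) * lam 2 0 ∧
       a * lam 3 1 + b * lam 2 2 + c * lam 1 3 = (2 / 3) * lam 1 1 ∧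
       a * lam 2 2 + b * lam 1 3 + c * lam 0 4 = (2 / 3) * lam 0 2) →
      a = g20 ∧ b = g11 ∧ c = g02 := by
  have hpd' : ∀ x : Fin 2 → ℝ, x ≠ 0 → 0 < gg g20 g11 g02 x := hpd
  have hlam' : ∀ i j : ℕ, lam i j = ∫ x in GG g20 g11 g02, x 0 ^ i * x 1 ^ j := hlam
  have mc : ∀ i j : ℕ, Continuous (fun x : Fin 2 → ℝ => x 0 ^ i * x 1 ^ j) := by
    intro i j; fun_prop
  -- the three key equations expanded
  have hexp : ∀ i j : ℕ,
      (∫ x in GG g20 g11 g02, gg g20 g11 g02 x * (x 0 ^ i * x 1 ^ j)) =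
        g20 * lam (i+2) j + g11 * lam (i+1) (j+1) + g02 * lam i (j+2) := by
    intro i j
    have hfun : (fun x : Fin 2 → ℝ => gg g20 g11 g02 x * (x 0 ^ i * x 1 ^ j)) =
        (fun x : Fin 2 → ℝ => g20 * (x 0 ^ (i+2) * x 1 ^ j)
          + g11 * (x 0 ^ (i+1) * x 1 ^ (j+1)) + g02 * (x 0 ^ i * x 1 ^ (j+2))) := by
      funext x; simp only [gg]; ring
    rw [hfun, integral_combo3 g20 g11 g02 hpd' (mc _ _) (mc _ _) (mc _ _),
      hlam' (i+2) j, hlam' (i+1) (j+1), hlam' i (j+2)]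
  have hkey : ∀ i j : ℕ, i + j = 2 →
      (∫ x in GG g20 g11 g02, gg g20 g11 g02 x * (x 0 ^ i * x 1 ^ j)) =
        (2/3) * lam i j := by
    intro i j hij
    rw [hlam' i j]
    refine key_identity g20 g11 g02 hpd' (mc i j) ?_
    intro c x hc
    simp only [Pi.smul_apply, smul_eq_mul, mul_pow]
    rw [show ∀ A B C D : ℝ, A * B * (C * D) = (A * C) * (B * D) by intros; ring,
      ← pow_add, hij]
  have eq1 := (hexp 2 0).symm.trans (hkey 2 0 rfl)
  have eq2 := (hexp 1 1).symm.trans (hkey 1 1 rfl)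
  have eq3 := (hexp 0 2).symm.trans (hkey 0 2 rfl)
  refine ⟨⟨eq1, eq2, eq3⟩, ?_⟩
  rintro a b c ⟨ha, hb, hc⟩
  set u := a - g20 with hu
  set v := b - g11 with hv
  set w := c - g02 with hw
  have h1 : u * lam 4 0 + v * lam 3 1 + w * lam 2 2 = 0 := by
    rw [hu, hv, hw]; linarith [ha, eq1]
  have h2 : u * lam 3 1 + v * lam 2 2 + w * lam 1 3 = 0 := by
    rw [hu, hv, hw]; linarith [hb, eq2]
  have h3 : u * lam 2 2 + v * lam 1 3 + w * lam 0 4 = 0 := by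
    rw [hu, hv, hw]; linarith [hc, eq3]
  set P : (Fin 2 → ℝ) → ℝ := fun x => u * x 0 ^ 2 + v * (x 0 * x 1) + w * x 1 ^ 2 with hP
  have hPc : Continuous P := by rw [hP]; fun_prop
  have hPint : (∫ x in GG g20 g11 g02, (P x) ^ 2) = 0 := by
    have hfun : (fun x : Fin 2 → ℝ => (P x) ^ 2) =
        (fun x : Fin 2 → ℝ => u^2 * (x 0 ^ 4 * x 1 ^ 0) + (2*u*v) * (x 0 ^ 3 * x 1 ^ 1)
          + (v^2 + 2*u*w) * (x 0 ^ 2 * x 1 ^ 2) + (2*v*w) * (x 0 ^ 1 * x 1 ^ 3)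
          + w^2 * (x 0 ^ 0 * x 1 ^ 4)) := by
      funext x; simp only [hP]; ring
    rw [hfun, integral_combo5 g20 g11 g02 hpd' (mc _ _) (mc _ _) (mc _ _) (mc _ _) (mc _ _),
      ← hlam' 4 0, ← hlam' 3 1, ← hlam' 2 2, ← hlam' 1 3, ← hlam' 0 4]
    linear_combination u * h1 + v * h2 + w * h3
  have hPae : (fun x => (P x) ^ 2) =ᵐ[volume.restrict (GG g20 g11 g02)] 0 := by
    rw [← integral_eq_zero_iff_of_nonneg (fun x => sq_nonneg (P x))
      (integrableOn_GG g20 g11 g02 hpd' (by fun_prop))]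
    exact hPint
  set U : Set (Fin 2 → ℝ) := {x | gg g20 g11 g02 x < 1} with hU
  have hUopen : IsOpen U := isOpen_lt (gg_cont g20 g11 g02) continuous_const
  have hUsub : U ⊆ GG g20 g11 g02 := fun x hx => show gg g20 g11 g02 x ≤ 1 from le_of_lt hx
  have hPaeU : (fun x => (P x) ^ 2) =ᵐ[volume.restrict U] 0 :=
    ae_restrict_of_ae_restrict_of_subset hUsub hPae
  have hEqOn : Set.EqOn (fun x => (P x) ^ 2) 0 U :=
    Measure.eqOn_open_of_ae_eq hPaeU hUopen (by fun_prop) continuousOn_const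
  have hzero : ∀ y : Fin 2 → ℝ, ∃ δ : ℝ, 0 < δ ∧ P (δ • y) = 0 := by
    intro y
    have h0U : (0 : Fin 2 → ℝ) ∈ U := by
      simp only [hU, Set.mem_setOf_eq, gg]
      norm_num
    have hcont : Continuous (fun s : ℝ => s • y) := by fun_prop
    have hopen : IsOpen ((fun s : ℝ => s • y) ⁻¹' U) := hUopen.preimage hcont
    have h0mem : (0 : ℝ) ∈ (fun s : ℝ => s • y) ⁻¹' U := by
      simp only [Set.mem_preimage, zero_smul]; exact h0U
    obtain ⟨ε, hε, hball⟩ := Metric.isOpen_iff.1 hopen 0 h0mem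
    refine ⟨ε/2, by linarith, ?_⟩
    have hmem : (ε/2 : ℝ) • y ∈ U := hball (by
      simp only [Metric.mem_ball, dist_zero_right, Real.norm_eq_abs]
      rw [abs_of_pos (by linarith)]; linarith)
    have := hEqOn hmem
    simpa using pow_eq_zero_iff (n := 2) (by norm_num) |>.1 this
  obtain ⟨δ₁, hδ₁, hP1⟩ := hzero ![1, 0]
  obtain ⟨δ₂, hδ₂, hP2⟩ := hzero ![0, 1]
  obtain ⟨δ₃, hδ₃, hP3⟩ := hzero ![1, 1]
  simp only [hP, Pi.smul_apply, Matrix.cons_val_zero, Matrix.cons_val_one, Matrix.head_cons,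
    smul_eq_mul, mul_one, mul_zero] at hP1 hP2 hP3
  have hu0 : u = 0 := by
    have : u * δ₁ ^ 2 = 0 := by linarith [hP1]
    rcases mul_eq_zero.1 this with h | h
    · exact h
    · exact absurd h (by positivity)
  have hw0 : w = 0 := by
    have : w * δ₂ ^ 2 = 0 := by linarith [hP2]
    rcases mul_eq_zero.1 this with h | h
    · exact h
    · exact absurd h (by positivity)
  have hv0 : v = 0 := by
    have : v * δ₃ ^ 2 = 0 := by
      rw [hu0, hw0] at hP3; linarith [hP3]
    rcases mul_eq_zero.1 this with h | h
    · exact h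
    · exact absurd h (by positivity)
  rw [hu, sub_eq_zero] at hu0
  rw [hv, sub_eq_zero] at hv0
  rw [hw, sub_eq_zero] at hw0
  exact ⟨hu0, hv0, hw0⟩
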